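/- Let G be a simple connected graph with n nodes and m edges. The additive degree-Kirchhoff index of the q-subdivision graph satisfies K̄(S_q(G)) = 4K̄(G) + 4q K̃(G) + mq(3mq - 2n + 1) - n(n-1). -/

import Mathlib

open Finset

variable {V : Type*}

/-- Normalized adjacency matrix `P = D^{-1/2} A D^{-1/2}`. -/
noncomputable def normAdj [Fintype V] (G : SimpleGraph V) [DecidableRel G.Adj] :
    Matrix V V ℝ :=
  Matrix.of fun i j =>
    if G.Adj i j then 1 / Real.sqrt ((G.degree i : ℝ) * (G.degree j : ℝ)) else 0

lemma normAdj_isHermitian [Fintype V] (G : SimpleGraph V) [DecidableRel G.Adj] :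
    (normAdj G).IsHermitian := by
  ext i j
  simp only [Matrix.conjTranspose_apply, normAdj, Matrix.of_apply, star_trivial]
  by_cases h : G.Adj i j
  · rw [if_pos h, if_pos ((G.adj_comm i j).mp h), mul_comm]
  · rw [if_neg h, if_neg (fun h' => h ((G.adj_comm j i).mp h'))]

/-- `μ` is an eigenvalue of `M`. -/
def IsEigenvalue {W : Type*} [Fintype W] (M : Matrix W W ℝ) (μ : ℝ) : Prop :=
  ∃ v : W → ℝ, v ≠ 0 ∧ M.mulVec v = μ • v

/-- Multiplicity of `μ` as an eigenvalue of `M` (dimension of the eigenspace). -/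
noncomputable def eigMult {W : Type*} [Fintype W] [DecidableEq W]
    (M : Matrix W W ℝ) (μ : ℝ) : ℕ :=
  Module.finrank ℝ (LinearMap.ker (Matrix.toLin' (M - μ • (1 : Matrix W W ℝ))))

/-- `r` is the effective-resistance function of `G`: `r i j = φ i - φ j` where
`L φ = e_i - e_j`. -/
def IsEffRes [Fintype V] [DecidableEq V] (G : SimpleGraph V) [DecidableRel G.Adj]
    (r : V → V → ℝ) : Prop :=
  ∀ i j : V, ∃ φ : V → ℝ,
    (G.lapMatrix ℝ).mulVec φ =
      (fun k => (if k = i then (1 : ℝ) else 0) - (if k = j then (1 : ℝ) else 0)) ∧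
    r i j = φ i - φ j

/-- `T` is the expected-hitting-time function of the simple random walk on `G`. -/
def IsHitting [Fintype V] (G : SimpleGraph V) [DecidableRel G.Adj] (T : V → V → ℝ) : Prop :=
  (∀ j, T j j = 0) ∧
  ∀ i j : V, i ≠ j → T i j = 1 + (∑ k ∈ G.neighborFinset i, T k j) / (G.degree i : ℝ)

/-- Kemeny constant `∑_{λ eigenvalue ≠ 1} 1/(1-λ)` of the random walk on `G`. -/
noncomputable def kemeny [Fintype V] [DecidableEq V] (G : SimpleGraph V) [DecidableRel G.Adj]
    (hP : (normAdj G).IsHermitian) : ℝ :=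
  ∑ i, if hP.eigenvalues i = 1 then 0 else 1 / (1 - hP.eigenvalues i)

/-- Kirchhoff index. -/
noncomputable def kirchhoff [Fintype V] (r : V → V → ℝ) : ℝ :=
  (∑ i, ∑ j, r i j) / 2

/-- Additive degree-Kirchhoff index. -/
noncomputable def addKirchhoff [Fintype V] (G : SimpleGraph V) [DecidableRel G.Adj]
    (r : V → V → ℝ) : ℝ :=
  (∑ i, ∑ j, ((G.degree i : ℝ) + (G.degree j : ℝ)) * r i j) / 2

/-- Multiplicative degree-Kirchhoff index. -/
noncomputable def mulKirchhoff [Fintype V] (G : SimpleGraph V) [DecidableRel G.Adj]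
    (r : V → V → ℝ) : ℝ :=
  (∑ i, ∑ j, (G.degree i : ℝ) * (G.degree j : ℝ) * r i j) / 2

/-- The adjacency relation of the q-subdivision graph. -/
def qSubAdj (G : SimpleGraph V) (q : ℕ) :
    (V ⊕ (G.edgeSet × Fin q)) → (V ⊕ (G.edgeSet × Fin q)) → Prop
  | Sum.inl u, Sum.inr p => u ∈ (p.1 : Sym2 V)
  | Sum.inr p, Sum.inl u => u ∈ (p.1 : Sym2 V)
  | _, _ => False

/-- The q-subdivision graph `S_q(G)`: every edge `uv` of `G` is replaced by `q`
disjoint paths of length 2. -/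
def qSubdivision (G : SimpleGraph V) (q : ℕ) :
    SimpleGraph (V ⊕ (G.edgeSet × Fin q)) where
  Adj := qSubAdj G q
  symm := by
    constructor
    intro a b h
    cases a <;> cases b <;> simp_all [qSubAdj]
  loopless := by
    constructor
    intro a h
    cases a <;> simp_all [qSubAdj]

noncomputable instance (G : SimpleGraph V) (q : ℕ) :
    DecidableRel (qSubdivision G q).Adj := Classical.decRel _

noncomputable instance [Fintype V] (G : SimpleGraph V) : Fintype G.edgeSet :=
  Fintype.ofFinite _



open Matrix SimpleGraph Sum

section Part1

variable [Fintype V] [DecidableEq V]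

private lemma sum_pair_mem {M : Type*} [AddCommMonoid M] (g : V → M) {a b : V} (hab : a ≠ b) :
    ∑ v, (if v ∈ s(a, b) then g v else 0) = g a + g b := by
  have h : ∀ v : V, (if v ∈ s(a, b) then g v else 0)
      = (if v = a then g v else 0) + (if v = b then g v else 0) := by
    intro v
    by_cases h1 : v = a <;> by_cases h2 : v = b <;>
      simp [Sym2.mem_iff, h1, h2] <;> simp_all
  rw [Finset.sum_congr rfl fun v _ => h v, Finset.sum_add_distrib]
  simp

private lemma diff_unique {G : SimpleGraph V} [DecidableRel G.Adj] (hconn : G.Connected)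
    {φ ψ : V → ℝ} (h : (G.lapMatrix ℝ) *ᵥ φ = (G.lapMatrix ℝ) *ᵥ ψ) (i j : V) :
    φ i - φ j = ψ i - ψ j := by
  have h0 : Matrix.toLin' (G.lapMatrix ℝ) (φ - ψ) = 0 := by
    rw [Matrix.toLin'_apply, Matrix.mulVec_sub, h, sub_self]
  have h1 := (G.lapMatrix_mulVec_eq_zero_iff_forall_reachable (x := φ - ψ)).mp
      (by rwa [Matrix.toLin'_apply] at h0) i j
      (hconn.preconnected i j)
  simp only [Pi.sub_apply] at h1
  linarith

private lemma effRes_self {G : SimpleGraph V} [DecidableRel G.Adj] {r : V → V → ℝ}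
    (hr : IsEffRes G r) (i : V) : r i i = 0 := by
  obtain ⟨φ, _, h2⟩ := hr i i
  rw [h2, sub_self]

private lemma effRes_symm {G : SimpleGraph V} [DecidableRel G.Adj] (hconn : G.Connected)
    {r : V → V → ℝ} (hr : IsEffRes G r) (i j : V) : r i j = r j i := by
  obtain ⟨φ, h1, h2⟩ := hr i j
  obtain ⟨ψ, h3, h4⟩ := hr j i
  have h : (G.lapMatrix ℝ) *ᵥ φ = (G.lapMatrix ℝ) *ᵥ (-ψ) := by
    rw [Matrix.mulVec_neg, h1, h3]
    funext k
    simp only [Pi.neg_apply]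
    ring
  have hd := diff_unique hconn h i j
  simp only [Pi.neg_apply] at hd
  rw [h2, h4]
  linarith

private lemma exists_K {G : SimpleGraph V} [DecidableRel G.Adj] (hconn : G.Connected)
    {r : V → V → ℝ} (hr : IsEffRes G r) :
    ∃ K : V → V → ℝ,
      (∀ i j, K i j = K j i) ∧
      (∀ i j, r i j = K i i + K j j - 2 * K i j) ∧
      (∀ j, (G.lapMatrix ℝ) *ᵥ (fun i => K i j)
        = fun i => (if i = j then (1:ℝ) else 0) - 1 / (Fintype.card V : ℝ)) := by
  have hV : Nonempty V := hconn.nonempty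
  have hn0 : ((Fintype.card V : ℝ)) ≠ 0 := by
    simp [Fintype.card_ne_zero]
  set n : ℝ := (Fintype.card V : ℝ) with hn
  set φc : V → V → V → ℝ := fun i j => (hr i j).choose with hφcdef
  have hφc : ∀ i j, (G.lapMatrix ℝ) *ᵥ (φc i j)
      = (fun k => (if k = i then (1:ℝ) else 0) - (if k = j then (1:ℝ) else 0)) :=
    fun i j => (hr i j).choose_spec.1
  have hφcr : ∀ i j, r i j = φc i j i - φc i j j := fun i j => (hr i j).choose_spec.2
  set ψ : V → V → ℝ := fun j i => (-(1/n)) * ∑ k, φc k j i with hψdef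
  have hψ : ∀ j, (G.lapMatrix ℝ) *ᵥ (ψ j) = fun i => (if i = j then (1:ℝ) else 0) - 1/n := by
    intro j
    have hψeq : ψ j = (-(1/n)) • (∑ k, φc k j) := by
      funext i
      simp [hψdef, Finset.sum_apply]
    rw [hψeq, Matrix.mulVec_smul]
    have hsum : (G.lapMatrix ℝ) *ᵥ (∑ k, φc k j) = ∑ k, ((G.lapMatrix ℝ) *ᵥ φc k j) := by
      funext i
      simp only [Matrix.mulVec, dotProduct, Finset.sum_apply, Finset.mul_sum]
      rw [Finset.sum_comm]
    rw [hsum]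
    funext i
    have h1 : (∑ k, ((G.lapMatrix ℝ) *ᵥ φc k j)) i
        = ∑ k, ((if i = k then (1:ℝ) else 0) - (if i = j then (1:ℝ) else 0)) := by
      rw [Finset.sum_apply]
      exact Finset.sum_congr rfl fun k _ => by rw [hφc k j]
    simp only [Pi.smul_apply, h1, smul_eq_mul]
    rw [Finset.sum_sub_distrib]
    simp only [Finset.sum_ite_eq, Finset.mem_univ, if_true, Finset.sum_const, card_univ,
      nsmul_eq_mul]
    field_simp
    rw [← hn]; ring
  set K : V → V → ℝ := fun i j => ψ j i - (∑ x, ψ j x) / n with hKdef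
  have hKcol : ∀ j, (G.lapMatrix ℝ) *ᵥ (fun i => K i j)
      = fun i => (if i = j then (1:ℝ) else 0) - 1/n := by
    intro j
    have : (fun i => K i j) = ψ j - ((∑ x, ψ j x) / n) • (fun _ => (1:ℝ)) := by
      funext i
      simp [hKdef]
    rw [this, Matrix.mulVec_sub, Matrix.mulVec_smul, G.lapMatrix_mulVec_const_eq_zero, hψ j]
    funext i
    simp
  have hKzero : ∀ j, ∑ i, K i j = 0 := by
    intro j
    simp only [hKdef]
    rw [Finset.sum_sub_distrib]
    simp only [Finset.sum_const, card_univ, nsmul_eq_mul]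
    field_simp
    rw [← hn]; ring
  have hKsymm : ∀ i j, K i j = K j i := by
    intro i j
    have h1 : ∑ x, K x i * (((G.lapMatrix ℝ) *ᵥ fun y => K y j) x) = K j i := by
      rw [hKcol j]
      have : ∀ x, K x i * ((if x = j then (1:ℝ) else 0) - 1/n)
          = (if x = j then K x i else 0) - K x i * (1/n) := by
        intro x; split_ifs <;> ring
      rw [Finset.sum_congr rfl fun x _ => this x, Finset.sum_sub_distrib]
      rw [Finset.sum_ite_eq' univ j (fun x => K x i)]
      rw [← Finset.sum_mul, hKzero i]
      simp
    have h3 : ∑ x, K x i * (((G.lapMatrix ℝ) *ᵥ fun y => K y j) x) = K i j := by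
      have hswap : ∑ x, K x i * (((G.lapMatrix ℝ) *ᵥ fun y => K y j) x)
          = ∑ y, (((G.lapMatrix ℝ) *ᵥ fun x => K x i) y) * K y j := by
        simp only [Matrix.mulVec, dotProduct, Finset.mul_sum, Finset.sum_mul]
        rw [Finset.sum_comm]
        refine Finset.sum_congr rfl fun y _ => Finset.sum_congr rfl fun x _ => ?_
        have hsymL : G.lapMatrix ℝ x y = G.lapMatrix ℝ y x := ((isSymm_lapMatrix (R := ℝ) (G := G)).apply x y).symm
        rw [hsymL]
        ring
      rw [hswap, hKcol i]
      have : ∀ y, ((if y = i then (1:ℝ) else 0) - 1/n) * K y j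
          = (if y = i then K y j else 0) - (1/n) * K y j := by
        intro y; split_ifs <;> ring
      rw [Finset.sum_congr rfl fun y _ => this y, Finset.sum_sub_distrib]
      rw [Finset.sum_ite_eq' univ i (fun y => K y j)]
      rw [← Finset.mul_sum, hKzero j]
      simp
    rw [← h1, h3]
  have hKr : ∀ i j, r i j = K i i + K j j - 2 * K i j := by
    intro i j
    have hlap : (G.lapMatrix ℝ) *ᵥ (fun x => K x i - K x j) = (G.lapMatrix ℝ) *ᵥ (φc i j) := by
      have : (fun x => K x i - K x j) = (fun x => K x i) - (fun x => K x j) := rfl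
      rw [this, Matrix.mulVec_sub, hKcol i, hKcol j, hφc i j]
      funext k
      simp only [Pi.sub_apply]
      ring
    have hd := diff_unique hconn hlap i j
    rw [hφcr i j, ← hd, hKsymm j i]
    ring
  exact ⟨K, hKsymm, hKr, hKcol⟩

private lemma lap_K_comb {G : SimpleGraph V} [DecidableRel G.Adj] {K : V → V → ℝ}
    (hKcol : ∀ j, (G.lapMatrix ℝ) *ᵥ (fun i => K i j)
      = fun i => (if i = j then (1:ℝ) else 0) - 1 / (Fintype.card V : ℝ))
    (η : V → ℝ) (hη : ∑ k, η k = 0) :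
    (G.lapMatrix ℝ) *ᵥ (fun i => ∑ k, η k * K i k) = η := by
  funext x
  show ∑ y, G.lapMatrix ℝ x y * ∑ k, η k * K y k = η x
  have h1 : ∑ y, G.lapMatrix ℝ x y * ∑ k, η k * K y k
      = ∑ k, η k * ∑ y, G.lapMatrix ℝ x y * K y k := by
    simp only [Finset.mul_sum]
    rw [Finset.sum_comm]
    exact Finset.sum_congr rfl fun k _ => Finset.sum_congr rfl fun y _ => by ring
  rw [h1]
  have h2 : ∀ k, ∑ y, G.lapMatrix ℝ x y * K y k
      = (if x = k then (1:ℝ) else 0) - 1 / (Fintype.card V : ℝ) := by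
    intro k
    have := congrFun (hKcol k) x
    simpa [Matrix.mulVec, dotProduct] using this
  rw [Finset.sum_congr rfl fun k _ => by rw [h2 k]]
  have : ∀ k, η k * ((if x = k then (1:ℝ) else 0) - 1 / (Fintype.card V : ℝ))
      = (if k = x then η k else 0) - η k * (1 / (Fintype.card V : ℝ)) := by
    intro k
    by_cases h : x = k <;> simp [h, eq_comm] <;> ring
  rw [Finset.sum_congr rfl fun k _ => this k, Finset.sum_sub_distrib]
  rw [Finset.sum_ite_eq' univ x η, ← Finset.sum_mul, hη]
  simp

private lemma degree_eq_sum_ite {G : SimpleGraph V} [DecidableRel G.Adj] (a : V) :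
    ((G.degree a : ℝ)) = ∑ b, if G.Adj a b then (1:ℝ) else 0 := by
  rw [← SimpleGraph.card_neighborFinset_eq_degree, SimpleGraph.neighborFinset_eq_filter]
  rw [Finset.card_filter]
  push_cast
  exact Finset.sum_congr rfl fun b _ => by split_ifs <;> simp

private lemma foster {G : SimpleGraph V} [DecidableRel G.Adj] {r K : V → V → ℝ}
    (hKsymm : ∀ i j, K i j = K j i)
    (hKr : ∀ i j, r i j = K i i + K j j - 2 * K i j)
    (hKcol : ∀ j, (G.lapMatrix ℝ) *ᵥ (fun i => K i j)
      = fun i => (if i = j then (1:ℝ) else 0) - 1 / (Fintype.card V : ℝ))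
    (hV : Nonempty V) :
    ∑ a, ∑ b, (if G.Adj a b then r a b else 0) = 2 * ((Fintype.card V : ℝ) - 1) := by
  have hn0 : ((Fintype.card V : ℝ)) ≠ 0 := by simp [Fintype.card_ne_zero]
  have htr : ∑ j, (((G.lapMatrix ℝ) *ᵥ fun i => K i j) j) = (Fintype.card V : ℝ) - 1 := by
    rw [Finset.sum_congr rfl fun j _ => by rw [hKcol j]]
    simp only [if_pos rfl]
    rw [Finset.sum_sub_distrib]
    simp only [Finset.sum_const, card_univ, nsmul_eq_mul, mul_one]
    field_simp
    simp
  have hT1 : ∑ j, ((G.degree j : ℝ) * K j j) - ∑ j, ∑ u, (if G.Adj j u then K u j else 0)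
      = (Fintype.card V : ℝ) - 1 := by
    rw [← htr, ← Finset.sum_sub_distrib]
    refine Finset.sum_congr rfl fun j _ => ?_
    rw [SimpleGraph.lapMatrix_mulVec_apply, SimpleGraph.neighborFinset_eq_filter,
      Finset.sum_filter]
  have hA1 : ∑ a, ∑ b, (if G.Adj a b then K a a else 0) = ∑ a, (G.degree a : ℝ) * K a a := by
    refine Finset.sum_congr rfl fun a _ => ?_
    rw [degree_eq_sum_ite, Finset.sum_mul]
    exact Finset.sum_congr rfl fun b _ => by split_ifs <;> ring
  have hA2 : ∑ a, ∑ b, (if G.Adj a b then K b b else 0) = ∑ a, (G.degree a : ℝ) * K a a := by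
    rw [Finset.sum_comm]
    refine Finset.sum_congr rfl fun b _ => ?_
    rw [degree_eq_sum_ite, Finset.sum_mul]
    refine Finset.sum_congr rfl fun a _ => ?_
    by_cases h : G.Adj a b
    · rw [if_pos h, if_pos h.symm]; ring
    · rw [if_neg h, if_neg (fun hh => h hh.symm)]; ring
  have hA3 : ∑ a, ∑ b, (if G.Adj a b then K a b else 0)
      = ∑ j, ∑ u, (if G.Adj j u then K u j else 0) := by
    refine Finset.sum_congr rfl fun a _ => Finset.sum_congr rfl fun b _ => ?_
    rw [hKsymm a b]
  have hsplit : ∑ a, ∑ b, (if G.Adj a b then r a b else 0)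
      = ∑ a, ∑ b, (if G.Adj a b then K a a else 0)
        + ∑ a, ∑ b, (if G.Adj a b then K b b else 0)
        - 2 * ∑ a, ∑ b, (if G.Adj a b then K a b else 0) := by
    rw [← Finset.sum_add_distrib, Finset.mul_sum, ← Finset.sum_sub_distrib]
    refine Finset.sum_congr rfl fun a _ => ?_
    rw [← Finset.sum_add_distrib, Finset.mul_sum, ← Finset.sum_sub_distrib]
    refine Finset.sum_congr rfl fun b _ => ?_
    rw [hKr a b]
    split_ifs <;> ring
  rw [hsplit, hA1, hA2, hA3]
  linarith

end Part1

section Part2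

variable [Fintype V] [DecidableEq V]

/-- Sum of `g` over the two endpoints of an unordered pair. -/
private def eSum (g : V → ℝ) : Sym2 V → ℝ :=
  Sym2.lift ⟨fun a b => g a + g b, fun a b => by ring⟩

@[simp] private lemma eSum_mk (g : V → ℝ) (a b : V) : eSum g s(a, b) = g a + g b :=
  Sym2.lift_mk _ a b

private lemma edge_cases {G : SimpleGraph V} {e : Sym2 V} (he : e ∈ G.edgeSet) :
    ∃ a b, G.Adj a b ∧ e = s(a, b) := by
  induction e with
  | _ a b => exact ⟨a, b, he, rfl⟩

private lemma sum_edge_coe {G : SimpleGraph V} [Fintype G.edgeSet] {M : Type*} [AddCommMonoid M]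
    (f : Sym2 V → M) :
    ∑ e : G.edgeSet, f ↑e = ∑ e ∈ G.edgeFinset, f e := by
  have h : G.edgeFinset = G.edgeSet.toFinset := rfl
  rw [h]
  exact Finset.sum_set_coe (s := G.edgeSet) (f := f)

private lemma two_mul_sum_edgeFinset {G : SimpleGraph V} [DecidableRel G.Adj] [Fintype G.edgeSet]
    (f : V → V → ℝ) (hf : ∀ a b, f a b = f b a) :
    2 * ∑ e ∈ G.edgeFinset, Sym2.lift ⟨f, hf⟩ e = ∑ a, ∑ b, if G.Adj a b then f a b else 0 := by
  have hmap : ∀ z ∈ (univ : Finset (V × V)).filter (fun z => G.Adj z.1 z.2),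
      Sym2.mk z.1 z.2 ∈ G.edgeFinset := by
    intro z hz
    simp only [Finset.mem_filter, Finset.mem_univ, true_and] at hz
    simpa [SimpleGraph.mem_edgeFinset] using hz
  have key : ∀ e ∈ G.edgeFinset,
      ∑ z ∈ ((univ : Finset (V × V)).filter (fun z => G.Adj z.1 z.2)).filter
        (fun z => Sym2.mk z.1 z.2 = e), f z.1 z.2 = 2 * Sym2.lift ⟨f, hf⟩ e := by
    intro e he
    induction e with
    | _ a b =>
      have hadj : G.Adj a b := by simpa [SimpleGraph.mem_edgeFinset] using he
      have hfiber : ((univ : Finset (V × V)).filter (fun z => G.Adj z.1 z.2)).filter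
          (fun z => Sym2.mk z.1 z.2 = s(a, b)) = {(a, b), (b, a)} := by
        ext z
        obtain ⟨x, y⟩ := z
        simp only [Finset.mem_filter, Finset.mem_univ, true_and, Finset.mem_insert,
          Finset.mem_singleton, Prod.mk.injEq, Sym2.eq_iff]
        constructor
        · rintro ⟨_, (⟨rfl, rfl⟩ | ⟨rfl, rfl⟩)⟩
          · exact Or.inl ⟨rfl, rfl⟩
          · exact Or.inr ⟨rfl, rfl⟩
        · rintro (⟨rfl, rfl⟩ | ⟨rfl, rfl⟩)
          · exact ⟨hadj, Or.inl ⟨rfl, rfl⟩⟩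
          · exact ⟨hadj.symm, Or.inr ⟨rfl, rfl⟩⟩
      rw [hfiber]
      have hne : ((a, b) : V × V) ≠ (b, a) := by
        intro h
        exact hadj.ne (congrArg Prod.fst h)
      rw [Finset.sum_insert (by simpa using hne), Finset.sum_singleton]
      simp only [Sym2.lift_mk]
      rw [hf b a]
      ring
  have h1 : ∑ a, ∑ b, (if G.Adj a b then f a b else 0)
      = ∑ z ∈ (univ : Finset (V × V)).filter (fun z => G.Adj z.1 z.2), f z.1 z.2 := by
    rw [Finset.sum_filter, ← Finset.univ_product_univ, Finset.sum_product]
  rw [h1, ← Finset.sum_fiberwise_of_maps_to hmap (fun z => f z.1 z.2)]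
  rw [Finset.mul_sum]
  exact Finset.sum_congr rfl fun e he => (key e he).symm

private lemma sum_incidence {G : SimpleGraph V} [DecidableRel G.Adj] [Fintype G.edgeSet]
    (ψ : V → ℝ) (u : V) :
    ∑ e ∈ G.edgeFinset, (if u ∈ e then eSum ψ e else 0)
      = (G.degree u : ℝ) * ψ u + ∑ v, (if G.Adj u v then ψ v else 0) := by
  have hf' : ∀ a b : V, (if u = a ∨ u = b then ψ a + ψ b else 0)
      = (if u = b ∨ u = a then ψ b + ψ a else 0) := by
    intro a b
    by_cases h : u = a ∨ u = b
    · rw [if_pos h, if_pos (or_comm.mp h)]; ring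
    · rw [if_neg h, if_neg (fun hh => h (or_comm.mp hh))]
  have h1 : ∀ e : Sym2 V, (if u ∈ e then eSum ψ e else 0)
      = Sym2.lift ⟨fun a b => if u = a ∨ u = b then ψ a + ψ b else 0, hf'⟩ e := by
    intro e
    induction e with
    | _ a b => simp [Sym2.mem_iff]
  rw [Finset.sum_congr rfl fun e _ => h1 e]
  have h2 := two_mul_sum_edgeFinset (G := G) _ hf'
  have h3 : ∀ a b : V, (if G.Adj a b then (if u = a ∨ u = b then ψ a + ψ b else 0) else 0)
      = (if a = u then (if G.Adj u b then ψ u + ψ b else 0) else 0)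
        + (if b = u then (if G.Adj a u then ψ a + ψ u else 0) else 0) := by
    intro a b
    by_cases ha : a = u <;> by_cases hb : b = u
    · subst ha; subst hb; simp
    · subst ha; simp [hb, eq_comm]
    · subst hb; simp [ha, eq_comm, Ne.symm ha]
    · simp [ha, hb, Ne.symm ha, Ne.symm hb]
  have h4 : ∑ a, ∑ b, (if G.Adj a b then (if u = a ∨ u = b then ψ a + ψ b else 0) else 0)
      = 2 * ((G.degree u : ℝ) * ψ u + ∑ v, (if G.Adj u v then ψ v else 0)) := by
    rw [Finset.sum_congr rfl fun a _ => Finset.sum_congr rfl fun b _ => h3 a b]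
    rw [Finset.sum_congr rfl fun a _ => Finset.sum_add_distrib, Finset.sum_add_distrib]
    have t1 : ∑ a, ∑ b, (if a = u then (if G.Adj u b then ψ u + ψ b else 0) else 0)
        = ∑ b, (if G.Adj u b then ψ u + ψ b else 0) := by
      rw [Finset.sum_comm]
      refine Finset.sum_congr rfl fun b _ => ?_
      rw [Finset.sum_ite_eq' univ u (fun _ => if G.Adj u b then ψ u + ψ b else 0)]
      simp
    have t2 : ∑ a, ∑ b, (if b = u then (if G.Adj a u then ψ a + ψ u else 0) else 0)
        = ∑ a, (if G.Adj a u then ψ a + ψ u else 0) := by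
      refine Finset.sum_congr rfl fun a _ => ?_
      rw [Finset.sum_ite_eq' univ u (fun _ => if G.Adj a u then ψ a + ψ u else 0)]
      simp
    have t3 : ∑ a, (if G.Adj a u then ψ a + ψ u else 0)
        = ∑ b, (if G.Adj u b then ψ u + ψ b else 0) := by
      refine Finset.sum_congr rfl fun a _ => ?_
      by_cases h : G.Adj a u
      · rw [if_pos h, if_pos h.symm]; ring
      · rw [if_neg h, if_neg (fun hh => h hh.symm)]
    have t4 : ∑ b, (if G.Adj u b then ψ u + ψ b else 0)
        = (G.degree u : ℝ) * ψ u + ∑ v, (if G.Adj u v then ψ v else 0) := by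
      have : ∀ b, (if G.Adj u b then ψ u + ψ b else 0)
          = ψ u * (if G.Adj u b then (1:ℝ) else 0) + (if G.Adj u b then ψ b else 0) := by
        intro b; split_ifs <;> ring
      rw [Finset.sum_congr rfl fun b _ => this b, Finset.sum_add_distrib, ← Finset.mul_sum,
        ← degree_eq_sum_ite]
      ring
    rw [t1, t2, t3, t4]
    ring
  rw [h4] at h2
  linarith

end Part2

section Part3

variable {G : SimpleGraph V} {q : ℕ}

private lemma qSub_adj_ll {u v : V} : ¬ (qSubdivision G q).Adj (Sum.inl u) (Sum.inl v) := by
  simp [qSubdivision, qSubAdj]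

private lemma qSub_adj_rr {p p' : G.edgeSet × Fin q} :
    ¬ (qSubdivision G q).Adj (Sum.inr p) (Sum.inr p') := by
  simp [qSubdivision, qSubAdj]

private lemma qSub_adj_lr {u : V} {p : G.edgeSet × Fin q} :
    (qSubdivision G q).Adj (Sum.inl u) (Sum.inr p) ↔ u ∈ (p.1 : Sym2 V) := by
  simp [qSubdivision, qSubAdj]

private lemma qSub_adj_rl {u : V} {p : G.edgeSet × Fin q} :
    (qSubdivision G q).Adj (Sum.inr p) (Sum.inl u) ↔ u ∈ (p.1 : Sym2 V) := by
  simp [qSubdivision, qSubAdj]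

variable [Fintype V] [DecidableEq V]

private lemma H_degree_inl [DecidableRel G.Adj] (u : V) :
    (qSubdivision G q).degree (Sum.inl u) = q * G.degree u := by
  rw [← SimpleGraph.card_neighborFinset_eq_degree, SimpleGraph.neighborFinset_eq_filter,
    Finset.card_filter, Fintype.sum_sum_type]
  have h1 : ∑ v : V, (if (qSubdivision G q).Adj (Sum.inl u) (Sum.inl v) then 1 else 0) = 0 := by
    simp [qSub_adj_ll]
  have h2 : ∑ p : G.edgeSet × Fin q,
      (if (qSubdivision G q).Adj (Sum.inl u) (Sum.inr p) then 1 else 0)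
      = q * G.degree u := by
    have hc : ∀ p : G.edgeSet × Fin q,
        (if (qSubdivision G q).Adj (Sum.inl u) (Sum.inr p) then 1 else 0)
        = (if u ∈ (p.1 : Sym2 V) then 1 else 0) := by
      intro p
      simp [qSub_adj_lr]
    rw [Finset.sum_congr rfl fun p _ => hc p, Fintype.sum_prod_type]
    have : ∀ e : G.edgeSet, ∑ _k : Fin q, (if u ∈ (e : Sym2 V) then 1 else 0)
        = q * (if u ∈ (e : Sym2 V) then 1 else 0) := by
      intro e
      rw [Finset.sum_const, card_univ, Fintype.card_fin, smul_eq_mul]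
    rw [Finset.sum_congr rfl fun e _ => this e, ← Finset.mul_sum]
    congr 1
    rw [sum_edge_coe (G := G) (fun e => if u ∈ e then 1 else 0)]
    rw [← Finset.card_filter]
    have : {e ∈ G.edgeFinset | u ∈ e} = G.incidenceFinset u :=
      (SimpleGraph.incidenceFinset_eq_filter G u).symm
    rw [this, SimpleGraph.card_incidenceFinset_eq_degree]
  rw [h1, h2, zero_add]

private lemma H_degree_inr [DecidableRel G.Adj] (p : G.edgeSet × Fin q) :
    (qSubdivision G q).degree (Sum.inr p) = 2 := by
  rw [← SimpleGraph.card_neighborFinset_eq_degree, SimpleGraph.neighborFinset_eq_filter,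
    Finset.card_filter, Fintype.sum_sum_type]
  obtain ⟨a, b, hadj, he⟩ := edge_cases p.1.2
  have h1 : ∑ v : V, (if (qSubdivision G q).Adj (Sum.inr p) (Sum.inl v) then 1 else 0) = 2 := by
    have hc : ∀ v : V, (if (qSubdivision G q).Adj (Sum.inr p) (Sum.inl v) then (1:ℕ) else 0)
        = (if v ∈ s(a, b) then 1 else 0) := by
      intro v
      simp [qSub_adj_rl, he]
    rw [Finset.sum_congr rfl fun v _ => hc v, sum_pair_mem (fun _ => (1:ℕ)) hadj.ne]
  have h2 : ∑ p' : G.edgeSet × Fin q,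
      (if (qSubdivision G q).Adj (Sum.inr p) (Sum.inr p') then 1 else 0) = 0 := by
    simp [qSub_adj_rr]
  rw [h1, h2]

private lemma H_lap_inl [DecidableRel G.Adj] (vec : V ⊕ (G.edgeSet × Fin q) → ℝ) (u : V) :
    ((qSubdivision G q).lapMatrix ℝ *ᵥ vec) (Sum.inl u)
      = (q : ℝ) * (G.degree u : ℝ) * vec (Sum.inl u)
        - ∑ p : G.edgeSet × Fin q, (if u ∈ (p.1 : Sym2 V) then vec (Sum.inr p) else 0) := by
  rw [SimpleGraph.lapMatrix_mulVec_apply, SimpleGraph.neighborFinset_eq_filter,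
    Finset.sum_filter, Fintype.sum_sum_type, H_degree_inl]
  have h1 : ∑ v : V, (if (qSubdivision G q).Adj (Sum.inl u) (Sum.inl v)
      then vec (Sum.inl v) else 0) = 0 := by
    simp [qSub_adj_ll]
  have h2 : ∀ p : G.edgeSet × Fin q, (if (qSubdivision G q).Adj (Sum.inl u) (Sum.inr p)
      then vec (Sum.inr p) else 0) = (if u ∈ (p.1 : Sym2 V) then vec (Sum.inr p) else 0) := by
    intro p
    simp [qSub_adj_lr]
  rw [h1, Finset.sum_congr rfl fun p _ => h2 p, zero_add]
  push_cast
  ring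

private lemma H_lap_inr [DecidableRel G.Adj] (vec : V ⊕ (G.edgeSet × Fin q) → ℝ)
    (p : G.edgeSet × Fin q) :
    ((qSubdivision G q).lapMatrix ℝ *ᵥ vec) (Sum.inr p)
      = 2 * vec (Sum.inr p) - ∑ v : V, (if v ∈ (p.1 : Sym2 V) then vec (Sum.inl v) else 0) := by
  rw [SimpleGraph.lapMatrix_mulVec_apply, SimpleGraph.neighborFinset_eq_filter,
    Finset.sum_filter, Fintype.sum_sum_type, H_degree_inr]
  have h1 : ∀ v : V, (if (qSubdivision G q).Adj (Sum.inr p) (Sum.inl v)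
      then vec (Sum.inl v) else 0) = (if v ∈ (p.1 : Sym2 V) then vec (Sum.inl v) else 0) := by
    intro v
    simp [qSub_adj_rl]
  have h2 : ∑ p' : G.edgeSet × Fin q, (if (qSubdivision G q).Adj (Sum.inr p) (Sum.inr p')
      then vec (Sum.inr p') else 0) = 0 := by
    simp [qSub_adj_rr]
  rw [h2, Finset.sum_congr rfl fun v _ => h1 v, add_zero]
  norm_num

private lemma H_connected (hconn : G.Connected) (hq : 0 < q) :
    (qSubdivision G q).Connected := by
  have hV : Nonempty V := hconn.nonempty
  rw [SimpleGraph.connected_iff]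
  have key : ∀ u v : V, G.Adj u v →
      (qSubdivision G q).Reachable (Sum.inl u) (Sum.inl v) := by
    intro u v h
    set p : G.edgeSet × Fin q := (⟨s(u, v), h⟩, ⟨0, hq⟩) with hp
    have h1 : (qSubdivision G q).Adj (Sum.inl u) (Sum.inr p) := by
      rw [qSub_adj_lr]
      exact Sym2.mem_mk_left u v
    have h2 : (qSubdivision G q).Adj (Sum.inr p) (Sum.inl v) := by
      rw [qSub_adj_rl]
      exact Sym2.mem_mk_right u v
    exact h1.reachable.trans h2.reachable
  have keyR : ∀ u v : V, (qSubdivision G q).Reachable (Sum.inl u) (Sum.inl v) := by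
    intro u v
    obtain ⟨w⟩ := hconn.preconnected u v
    induction w with
    | nil => exact SimpleGraph.Reachable.refl _
    | cons h _ ih => exact (key _ _ h).trans ih
  have keyE : ∀ p : G.edgeSet × Fin q, ∃ a : V,
      (qSubdivision G q).Reachable (Sum.inr p) (Sum.inl a) := by
    intro p
    obtain ⟨a, b, hadj, he⟩ := edge_cases p.1.2
    refine ⟨a, SimpleGraph.Adj.reachable ?_⟩
    rw [qSub_adj_rl, he]
    exact Sym2.mem_mk_left a b
  constructor
  · intro x y
    obtain (u | p) := x <;> obtain (v | p') := y
    · exact keyR u v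
    · obtain ⟨a, ha⟩ := keyE p'
      exact (keyR u a).trans ha.symm
    · obtain ⟨a, ha⟩ := keyE p
      exact ha.trans (keyR a v)
    · obtain ⟨a, ha⟩ := keyE p
      obtain ⟨b, hb⟩ := keyE p'
      exact ha.trans ((keyR a b).trans hb.symm)
  · exact ⟨Sum.inl hV.some⟩

private lemma lap_PhiA [DecidableRel G.Adj] (hq : 0 < q) (ψ : V → ℝ) :
    ((qSubdivision G q).lapMatrix ℝ) *ᵥ
        (Sum.elim (fun w => (2 / (q:ℝ)) * ψ w)
          (fun p : G.edgeSet × Fin q => (1 / (q:ℝ)) * eSum ψ p.1))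
      = Sum.elim (fun w => ((G.lapMatrix ℝ) *ᵥ ψ) w) (fun _ => 0) := by
  have hq0 : (q : ℝ) ≠ 0 := Nat.cast_ne_zero.mpr hq.ne'
  funext x
  obtain (u | p) := x
  · rw [H_lap_inl]
    simp only [Sum.elim_inl, Sum.elim_inr]
    rw [Fintype.sum_prod_type]
    have hk : ∀ e : G.edgeSet,
        ∑ _k : Fin q, (if u ∈ (e : Sym2 V) then (1 / (q:ℝ)) * eSum ψ ↑e else 0)
        = (if u ∈ (e : Sym2 V) then eSum ψ ↑e else 0) := by
      intro e
      rw [Finset.sum_const, card_univ, Fintype.card_fin, nsmul_eq_mul]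
      split_ifs
      · field_simp
      · ring
    rw [Finset.sum_congr rfl fun e _ => hk e,
      sum_edge_coe (G := G) (fun e => if u ∈ e then eSum ψ e else 0), sum_incidence]
    rw [SimpleGraph.lapMatrix_mulVec_apply, SimpleGraph.neighborFinset_eq_filter,
      Finset.sum_filter]
    field_simp
    ring
  · rw [H_lap_inr]
    simp only [Sum.elim_inl, Sum.elim_inr]
    obtain ⟨a, b, hadj, he⟩ := edge_cases p.1.2
    rw [he, sum_pair_mem (fun v => (2 / (q:ℝ)) * ψ v) hadj.ne, eSum_mk]
    field_simp
    ring

private lemma lap_delta [DecidableRel G.Adj] (p : G.edgeSet × Fin q) :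
    ((qSubdivision G q).lapMatrix ℝ) *ᵥ
        (fun x => if x = Sum.inr p then (1:ℝ) else 0)
      = Sum.elim (fun u => -(if u ∈ (p.1 : Sym2 V) then (1:ℝ) else 0))
          (fun p' => if p' = p then 2 else 0) := by
  funext x
  obtain (u | p') := x
  · rw [H_lap_inl]
    simp only [Sum.elim_inl, reduceCtorEq, if_false, mul_zero, zero_sub, neg_inj]
    have : ∀ p' : G.edgeSet × Fin q,
        (if u ∈ (p'.1 : Sym2 V) then (if (Sum.inr p' : V ⊕ (G.edgeSet × Fin q)) = Sum.inr p
          then (1:ℝ) else 0) else 0)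
        = (if p' = p then (if u ∈ (p.1 : Sym2 V) then (1:ℝ) else 0) else 0) := by
      intro p'
      by_cases h : p' = p
      · subst h; simp
      · simp [h, Sum.inr.injEq]
    rw [Finset.sum_congr rfl fun p' _ => this p']
    rw [Finset.sum_ite_eq' univ p (fun _ => if u ∈ (p.1 : Sym2 V) then (1:ℝ) else 0)]
    simp
  · rw [H_lap_inr]
    simp only [Sum.elim_inr, Sum.inr.injEq, reduceCtorEq, if_false]
    simp only [ite_self, Finset.sum_const, smul_zero, sub_zero]
    split_ifs <;> ring

end Part3

section Part4

variable [Fintype V] [DecidableEq V] {G : SimpleGraph V} {q : ℕ}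

private lemma mulVec_sub_smul {n : Type*} [Fintype n] (M : Matrix n n ℝ) (f g : n → ℝ) (c : ℝ) :
    M *ᵥ (fun x => f x - c * g x) = fun x => (M *ᵥ f) x - c * ((M *ᵥ g) x) := by
  funext x
  simp only [Matrix.mulVec, dotProduct]
  have h : ∀ y, M x y * (f y - c * g y) = M x y * f y - c * (M x y * g y) := fun y => by ring
  rw [Finset.sum_congr rfl fun y _ => h y, Finset.sum_sub_distrib, ← Finset.mul_sum]

private lemma mulVec_add_sub_smul {n : Type*} [Fintype n] (M : Matrix n n ℝ) (f g h : n → ℝ)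
    (c1 c2 : ℝ) :
    M *ᵥ (fun x => f x + c1 * g x - c2 * h x)
      = fun x => (M *ᵥ f) x + c1 * ((M *ᵥ g) x) - c2 * ((M *ᵥ h) x) := by
  funext x
  simp only [Matrix.mulVec, dotProduct]
  have hh : ∀ y, M x y * (f y + c1 * g y - c2 * h y)
      = (M x y * f y + c1 * (M x y * g y)) - c2 * (M x y * h y) := fun y => by ring
  rw [Finset.sum_congr rfl fun y _ => hh y, Finset.sum_sub_distrib, Finset.sum_add_distrib,
    ← Finset.mul_sum, ← Finset.mul_sum]

private lemma rp_ll [DecidableRel G.Adj] (hconn : G.Connected) (hq : 0 < q)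
    {r : V → V → ℝ} {r' : V ⊕ (G.edgeSet × Fin q) → V ⊕ (G.edgeSet × Fin q) → ℝ}
    (hr : IsEffRes G r) (hr' : IsEffRes (qSubdivision G q) r') (u v : V) :
    r' (Sum.inl u) (Sum.inl v) = (2 / (q:ℝ)) * r u v := by
  have hconn' := H_connected hconn hq
  obtain ⟨φ', h1, h2⟩ := hr' (Sum.inl u) (Sum.inl v)
  obtain ⟨φ, h3, h4⟩ := hr u v
  have heq : ((qSubdivision G q).lapMatrix ℝ) *ᵥ
      (Sum.elim (fun w => (2/(q:ℝ)) * φ w)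
        (fun p : G.edgeSet × Fin q => (1/(q:ℝ)) * eSum φ p.1))
      = ((qSubdivision G q).lapMatrix ℝ) *ᵥ φ' := by
    rw [lap_PhiA hq φ, h1]
    funext x
    obtain (w | p) := x
    · simp only [Sum.elim_inl]
      rw [h3]
      simp
    · simp
  have hd := diff_unique hconn' heq (Sum.inl u) (Sum.inl v)
  rw [h2, ← hd]
  simp only [Sum.elim_inl]
  rw [h4]
  ring

private lemma rp_lr [DecidableRel G.Adj] (hconn : G.Connected) (hq : 0 < q)
    {r : V → V → ℝ} {r' : V ⊕ (G.edgeSet × Fin q) → V ⊕ (G.edgeSet × Fin q) → ℝ}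
    (hr' : IsEffRes (qSubdivision G q) r')
    {K : V → V → ℝ}
    (hKsymm : ∀ i j, K i j = K j i)
    (hKr : ∀ i j, r i j = K i i + K j j - 2 * K i j)
    (hKcol : ∀ j, (G.lapMatrix ℝ) *ᵥ (fun i => K i j)
      = fun i => (if i = j then (1:ℝ) else 0) - 1 / (Fintype.card V : ℝ))
    (u a b : V) (hadj : G.Adj a b) (p : G.edgeSet × Fin q) (hp : (p.1 : Sym2 V) = s(a, b)) :
    r' (Sum.inl u) (Sum.inr p) = (1/(q:ℝ)) * (r u a + r u b - r a b / 2) + 1/2 := by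
  have hconn' := H_connected hconn hq
  have hq0 : (q:ℝ) ≠ 0 := Nat.cast_ne_zero.mpr hq.ne'
  set η : V → ℝ := fun k => (if k = u then 1 else 0) - (1/2) * (if k ∈ s(a,b) then 1 else 0)
    with hηdef
  have hηsum : ∑ k, η k = 0 := by
    simp only [hηdef]
    rw [Finset.sum_sub_distrib, Finset.sum_ite_eq' univ u (fun _ => (1:ℝ)),
      ← Finset.mul_sum, sum_pair_mem (fun _ => (1:ℝ)) hadj.ne]
    norm_num
  set ψ : V → ℝ := fun i => ∑ k, η k * K i k with hψdef
  have hψ : (G.lapMatrix ℝ) *ᵥ ψ = η := lap_K_comb hKcol η hηsum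
  have hψx : ∀ x, ψ x = K x u - (1/2) * (K x a + K x b) := by
    intro x
    simp only [hψdef, hηdef]
    have hpt : ∀ k, ((if k = u then (1:ℝ) else 0) - (1/2) * (if k ∈ s(a,b) then 1 else 0)) * K x k
        = (if k = u then K x k else 0) - (1/2) * (if k ∈ s(a,b) then K x k else 0) := by
      intro k; split_ifs <;> ring
    rw [Finset.sum_congr rfl fun k _ => hpt k, Finset.sum_sub_distrib,
      Finset.sum_ite_eq' univ u (fun k => K x k), ← Finset.mul_sum,
      sum_pair_mem (fun k => K x k) hadj.ne]
    simp
  set Φ : V ⊕ (G.edgeSet × Fin q) → ℝ := fun x =>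
    (Sum.elim (fun w => (2/(q:ℝ)) * ψ w)
      (fun p' : G.edgeSet × Fin q => (1/(q:ℝ)) * eSum ψ p'.1)) x
      - (1/2) * ((fun y => if y = Sum.inr p then (1:ℝ) else 0) x) with hΦdef
  have hlapΦ : ((qSubdivision G q).lapMatrix ℝ) *ᵥ Φ
      = fun x => (if x = Sum.inl u then (1:ℝ) else 0) - (if x = Sum.inr p then 1 else 0) := by
    have h0 : ((qSubdivision G q).lapMatrix ℝ) *ᵥ Φ
        = fun x => (((qSubdivision G q).lapMatrix ℝ) *ᵥ (Sum.elim (fun w => (2/(q:ℝ)) * ψ w)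
            (fun p' : G.edgeSet × Fin q => (1/(q:ℝ)) * eSum ψ p'.1))) x
          - (1/2) * ((((qSubdivision G q).lapMatrix ℝ) *ᵥ
            (fun y => if y = Sum.inr p then (1:ℝ) else 0)) x) :=
      mulVec_sub_smul _ _ _ _
    rw [h0, lap_PhiA hq ψ, lap_delta p]
    funext x
    obtain (w | p') := x
    · simp only [Sum.elim_inl, Sum.inl.injEq, reduceCtorEq, if_false]
      rw [hψ, hp]
      simp only [hηdef]
      ring
    · simp only [Sum.elim_inr, Sum.inr.injEq, reduceCtorEq, if_false]
      split_ifs <;> norm_num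
  obtain ⟨φ'', h1, h2⟩ := hr' (Sum.inl u) (Sum.inr p)
  have hd := diff_unique hconn' (hlapΦ.trans h1.symm) (Sum.inl u) (Sum.inr p)
  rw [h2, ← hd]
  have e1 : Φ (Sum.inl u) = (2/(q:ℝ)) * ψ u := by
    simp only [hΦdef, Sum.elim_inl, reduceCtorEq, if_false]
    ring
  have e2 : Φ (Sum.inr p) = (1/(q:ℝ)) * (ψ a + ψ b) - 1/2 := by
    simp only [hΦdef, Sum.elim_inr]
    rw [hp, eSum_mk]
    norm_num
  rw [e1, e2, hψx u, hψx a, hψx b, hKr u a, hKr u b, hKr a b,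
    hKsymm a u, hKsymm b u, hKsymm b a]
  field_simp
  ring

private lemma rp_rr [DecidableRel G.Adj] (hconn : G.Connected) (hq : 0 < q)
    {r : V → V → ℝ} {r' : V ⊕ (G.edgeSet × Fin q) → V ⊕ (G.edgeSet × Fin q) → ℝ}
    (hr' : IsEffRes (qSubdivision G q) r')
    {K : V → V → ℝ}
    (hKsymm : ∀ i j, K i j = K j i)
    (hKr : ∀ i j, r i j = K i i + K j j - 2 * K i j)
    (hKcol : ∀ j, (G.lapMatrix ℝ) *ᵥ (fun i => K i j)
      = fun i => (if i = j then (1:ℝ) else 0) - 1 / (Fintype.card V : ℝ))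
    (a b c d : V) (hab : G.Adj a b) (hcd : G.Adj c d) (p p' : G.edgeSet × Fin q)
    (hp : (p.1 : Sym2 V) = s(a, b)) (hp' : (p'.1 : Sym2 V) = s(c, d)) (hne : p ≠ p') :
    r' (Sum.inr p) (Sum.inr p')
      = 1 + (1/(2*(q:ℝ))) * (r a c + r a d + r b c + r b d - r a b - r c d) := by
  have hconn' := H_connected hconn hq
  have hq0 : (q:ℝ) ≠ 0 := Nat.cast_ne_zero.mpr hq.ne'
  set η : V → ℝ := fun k =>
    (1/2) * (if k ∈ s(a,b) then 1 else 0) - (1/2) * (if k ∈ s(c,d) then 1 else 0) with hηdef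
  have hηsum : ∑ k, η k = 0 := by
    simp only [hηdef]
    rw [Finset.sum_sub_distrib, ← Finset.mul_sum, ← Finset.mul_sum,
      sum_pair_mem (fun _ => (1:ℝ)) hab.ne, sum_pair_mem (fun _ => (1:ℝ)) hcd.ne]
    norm_num
  set ψ : V → ℝ := fun i => ∑ k, η k * K i k with hψdef
  have hψ : (G.lapMatrix ℝ) *ᵥ ψ = η := lap_K_comb hKcol η hηsum
  have hψx : ∀ x, ψ x = (1/2) * (K x a + K x b) - (1/2) * (K x c + K x d) := by
    intro x
    simp only [hψdef, hηdef]
    have hpt : ∀ k, ((1/2) * (if k ∈ s(a,b) then (1:ℝ) else 0)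
          - (1/2) * (if k ∈ s(c,d) then 1 else 0)) * K x k
        = (1/2) * (if k ∈ s(a,b) then K x k else 0)
          - (1/2) * (if k ∈ s(c,d) then K x k else 0) := by
      intro k; split_ifs <;> ring
    rw [Finset.sum_congr rfl fun k _ => hpt k, Finset.sum_sub_distrib,
      ← Finset.mul_sum, ← Finset.mul_sum,
      sum_pair_mem (fun k => K x k) hab.ne, sum_pair_mem (fun k => K x k) hcd.ne]
  set Φ : V ⊕ (G.edgeSet × Fin q) → ℝ := fun x =>
    (Sum.elim (fun w => (2/(q:ℝ)) * ψ w)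
      (fun p'' : G.edgeSet × Fin q => (1/(q:ℝ)) * eSum ψ p''.1)) x
      + (1/2) * ((fun y => if y = Sum.inr p then (1:ℝ) else 0) x)
      - (1/2) * ((fun y => if y = Sum.inr p' then (1:ℝ) else 0) x) with hΦdef
  have hlapΦ : ((qSubdivision G q).lapMatrix ℝ) *ᵥ Φ
      = fun x => (if x = Sum.inr p then (1:ℝ) else 0) - (if x = Sum.inr p' then 1 else 0) := by
    have h0 : ((qSubdivision G q).lapMatrix ℝ) *ᵥ Φ
        = fun x => (((qSubdivision G q).lapMatrix ℝ) *ᵥ (Sum.elim (fun w => (2/(q:ℝ)) * ψ w)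
            (fun p'' : G.edgeSet × Fin q => (1/(q:ℝ)) * eSum ψ p''.1))) x
          + (1/2) * ((((qSubdivision G q).lapMatrix ℝ) *ᵥ
            (fun y => if y = Sum.inr p then (1:ℝ) else 0)) x)
          - (1/2) * ((((qSubdivision G q).lapMatrix ℝ) *ᵥ
            (fun y => if y = Sum.inr p' then (1:ℝ) else 0)) x) :=
      mulVec_add_sub_smul _ _ _ _ _ _
    rw [h0, lap_PhiA hq ψ, lap_delta p, lap_delta p']
    funext x
    obtain (w | p'') := x
    · simp only [Sum.elim_inl, reduceCtorEq, if_false]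
      rw [hψ, hp, hp']
      simp only [hηdef]
      ring
    · simp only [Sum.elim_inr, Sum.inr.injEq, reduceCtorEq, if_false]
      split_ifs <;> norm_num
  obtain ⟨φ'', h1, h2⟩ := hr' (Sum.inr p) (Sum.inr p')
  have hd := diff_unique hconn' (hlapΦ.trans h1.symm) (Sum.inr p) (Sum.inr p')
  rw [h2, ← hd]
  have e1 : Φ (Sum.inr p) = (1/(q:ℝ)) * (ψ a + ψ b) + 1/2 := by
    simp only [hΦdef, Sum.elim_inr, Sum.inr.injEq]
    rw [hp, eSum_mk]
    norm_num [hne]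
  have e2 : Φ (Sum.inr p') = (1/(q:ℝ)) * (ψ c + ψ d) - 1/2 := by
    simp only [hΦdef, Sum.elim_inr, Sum.inr.injEq]
    rw [hp', eSum_mk]
    norm_num [hne.symm]
  rw [e1, e2, hψx a, hψx b, hψx c, hψx d,
    hKr a c, hKr a d, hKr b c, hKr b d, hKr a b, hKr c d]
  rw [hKsymm b a, hKsymm c a, hKsymm c b, hKsymm d a, hKsymm d b, hKsymm d c]
  field_simp
  ring

end Part4

section Part5

variable [Fintype V] [DecidableEq V]

private lemma dsum_add {α β : Type*} [Fintype α] [Fintype β] (c1 c2 : ℝ) (F1 F2 : α → β → ℝ) :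
    ∑ a, ∑ b, (c1 * F1 a b + c2 * F2 a b)
      = c1 * (∑ a, ∑ b, F1 a b) + c2 * (∑ a, ∑ b, F2 a b) := by
  simp only [Finset.sum_add_distrib, Finset.mul_sum]

private lemma dsum_sub {α β : Type*} [Fintype α] [Fintype β] (c1 c2 : ℝ) (F1 F2 : α → β → ℝ) :
    ∑ a, ∑ b, (c1 * F1 a b - c2 * F2 a b)
      = c1 * (∑ a, ∑ b, F1 a b) - c2 * (∑ a, ∑ b, F2 a b) := by
  simp only [Finset.sum_sub_distrib, Finset.mul_sum]

private lemma dsum4 {α β : Type*} [Fintype α] [Fintype β] (c1 c2 c3 c4 : ℝ)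
    (F1 F2 F3 F4 : α → β → ℝ) :
    ∑ a, ∑ b, (c1 * F1 a b + c2 * F2 a b - c3 * F3 a b + c4 * F4 a b)
      = c1 * (∑ a, ∑ b, F1 a b) + c2 * (∑ a, ∑ b, F2 a b) - c3 * (∑ a, ∑ b, F3 a b)
        + c4 * (∑ a, ∑ b, F4 a b) := by
  simp only [Finset.sum_add_distrib, Finset.sum_sub_distrib, Finset.mul_sum]

private lemma sum_sum_sum_type {α β : Type*} [Fintype α] [Fintype β] (f : α ⊕ β → α ⊕ β → ℝ) :
    ∑ x, ∑ y, f x y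
      = (∑ a, ∑ a', f (Sum.inl a) (Sum.inl a')) + (∑ a, ∑ b, f (Sum.inl a) (Sum.inr b))
        + ((∑ b, ∑ a, f (Sum.inr b) (Sum.inl a)) + (∑ b, ∑ b', f (Sum.inr b) (Sum.inr b'))) := by
  rw [Fintype.sum_sum_type]
  congr 1
  · rw [← Finset.sum_add_distrib]
    exact Finset.sum_congr rfl fun a _ => Fintype.sum_sum_type _
  · rw [← Finset.sum_add_distrib]
    exact Finset.sum_congr rfl fun b _ => Fintype.sum_sum_type _

private lemma sum_prodE {G : SimpleGraph V} [Fintype G.edgeSet] (g : Sym2 V → ℝ) (q : ℕ) :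
    ∑ p : G.edgeSet × Fin q, g ↑p.1 = (q:ℝ) * ∑ e ∈ G.edgeFinset, g e := by
  rw [Fintype.sum_prod_type]
  have h : ∀ e : G.edgeSet, ∑ _k : Fin q, g ↑e = (q:ℝ) * g ↑e := by
    intro e
    rw [Finset.sum_const, card_univ, Fintype.card_fin, nsmul_eq_mul]
  rw [Finset.sum_congr rfl fun e _ => h e, ← Finset.mul_sum, sum_edge_coe (G := G) g]

private lemma adj_sum_left {G : SimpleGraph V} [DecidableRel G.Adj] (g : V → ℝ) :
    ∑ a, ∑ b, (if G.Adj a b then g a else 0) = ∑ a, g a * (G.degree a : ℝ) := by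
  refine Finset.sum_congr rfl fun a _ => ?_
  rw [degree_eq_sum_ite, Finset.mul_sum]
  exact Finset.sum_congr rfl fun b _ => by split_ifs <;> ring

private lemma adj_sum_right {G : SimpleGraph V} [DecidableRel G.Adj] (g : V → ℝ) :
    ∑ a, ∑ b, (if G.Adj a b then g b else 0) = ∑ b, g b * (G.degree b : ℝ) := by
  rw [Finset.sum_comm]
  refine Finset.sum_congr rfl fun b _ => ?_
  rw [degree_eq_sum_ite, Finset.mul_sum]
  refine Finset.sum_congr rfl fun a _ => ?_
  by_cases h : G.Adj a b
  · rw [if_pos h, if_pos h.symm]; ring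
  · rw [if_neg h, if_neg (fun hh => h hh.symm)]; ring

end Part5

/-- `K̄(S_q(G)) = 4K̄(G) + 4q K̃(G) + mq(3mq - 2n + 1) - n(n-1)`. -/
theorem stmt17 [Fintype V] [DecidableEq V] (G : SimpleGraph V) [DecidableRel G.Adj]
    (hconn : G.Connected) (q : ℕ) (hq : 0 < q)
    (r : V → V → ℝ) (r' : (V ⊕ (G.edgeSet × Fin q)) → (V ⊕ (G.edgeSet × Fin q)) → ℝ)
    (hr : IsEffRes G r) (hr' : IsEffRes (qSubdivision G q) r') :
    addKirchhoff (qSubdivision G q) r' =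
      4 * addKirchhoff G r + 4 * q * mulKirchhoff G r +
        (G.edgeFinset.card : ℝ) * q *
          (3 * (G.edgeFinset.card : ℝ) * q - 2 * (Fintype.card V : ℝ) + 1) -
        (Fintype.card V : ℝ) * ((Fintype.card V : ℝ) - 1) := by
  classical
  have hconn' := H_connected hconn hq
  have hq0 : (q:ℝ) ≠ 0 := Nat.cast_ne_zero.mpr hq.ne'
  have hrsymm : ∀ i j, r i j = r j i := effRes_symm hconn hr
  have hrself : ∀ i, r i i = 0 := effRes_self hr
  have hr'symm : ∀ x y, r' x y = r' y x := effRes_symm hconn' hr'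
  have hr'self : ∀ x, r' x x = 0 := effRes_self hr'
  obtain ⟨K, hKsymm, hKr, hKcol⟩ := exists_K hconn hr
  set n : ℝ := (Fintype.card V : ℝ) with hn
  set m : ℝ := (G.edgeFinset.card : ℝ) with hm
  -- atoms
  set Su : V → ℝ := fun u => ∑ v, (G.degree v : ℝ) * r u v with hSudef
  set SA : ℝ := ∑ u, ∑ v, (G.degree u : ℝ) * r u v with hSA
  set SM : ℝ := ∑ u, ∑ v, (G.degree u : ℝ) * (G.degree v : ℝ) * r u v with hSM
  have hF : ∑ a, ∑ b, (if G.Adj a b then r a b else 0) = 2 * (n - 1) := by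
    rw [hn]
    exact foster hKsymm hKr hKcol hconn.nonempty
  have hdeg2m : ∑ u, (G.degree u : ℝ) = 2 * m := by
    have h2 := two_mul_sum_edgeFinset (G := G) (fun _ _ => (1:ℝ)) (fun _ _ => rfl)
    have hone : ∀ e : Sym2 V, Sym2.lift ⟨fun _ _ => (1:ℝ), fun _ _ => rfl⟩ e = 1 := by
      intro e
      induction e with
      | _ a b => rfl
    have hL : ∑ e ∈ G.edgeFinset, Sym2.lift ⟨fun _ _ => (1:ℝ), fun _ _ => rfl⟩ e = m := by
      rw [Finset.sum_congr rfl fun e _ => hone e, Finset.sum_const, nsmul_eq_mul, mul_one, hm]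
    have hR : ∑ a, ∑ b, (if G.Adj a b then (1:ℝ) else 0) = ∑ u, (G.degree u : ℝ) := by
      rw [adj_sum_left (fun _ => (1:ℝ))]
      simp
    rw [hL, hR] at h2
    linarith
  have hSb : ∑ u, ∑ v, (G.degree v : ℝ) * r u v = SA := by
    rw [hSA, Finset.sum_comm]
    exact Finset.sum_congr rfl fun v _ => Finset.sum_congr rfl fun u _ => by rw [hrsymm u v]
  have hSusum : ∑ u, Su u = SA := by
    rw [← hSb]
  have hSuD : ∑ u, (G.degree u : ℝ) * Su u = SM := by
    rw [hSM]
    refine Finset.sum_congr rfl fun u _ => ?_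
    rw [hSudef, Finset.mul_sum]
    exact Finset.sum_congr rfl fun v _ => by ring
  -- lifted symmetric functions on edges
  have hRLsym : ∀ u a b : V, (1/(q:ℝ)) * (r u a + r u b - r a b / 2) + 1/2
      = (1/(q:ℝ)) * (r u b + r u a - r b a / 2) + 1/2 := by
    intro u a b; rw [hrsymm a b]; ring
  set RL : V → Sym2 V → ℝ := fun u => Sym2.lift
    ⟨fun a b => (1/(q:ℝ)) * (r u a + r u b - r a b / 2) + 1/2,
      fun a b => hRLsym u a b⟩ with hRLdef
  set rS : V → Sym2 V → ℝ := fun x => Sym2.lift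
    ⟨fun c d => r x c + r x d, fun c d => add_comm (r x c) (r x d)⟩ with hrSdef
  set RE : Sym2 V → ℝ := Sym2.lift ⟨r, hrsymm⟩ with hREdef
  set SS : Sym2 V → ℝ := Sym2.lift
    ⟨fun a b => Su a + Su b, fun a b => add_comm (Su a) (Su b)⟩ with hSSdef
  set CR : Sym2 V → Sym2 V → ℝ := fun e f => Sym2.lift
    ⟨fun a b => rS a f + rS b f, fun a b => add_comm (rS a f) (rS b f)⟩ e with hCRdef
  set RR : Sym2 V → Sym2 V → ℝ :=
    fun e f => 1 + (1/(2*(q:ℝ))) * (CR e f - RE e - RE f) with hRRdef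
  -- resistance formulas
  have hll : ∀ u v, r' (Sum.inl u) (Sum.inl v) = (2/(q:ℝ)) * r u v := rp_ll hconn hq hr hr'
  have hlr : ∀ u (p : G.edgeSet × Fin q), r' (Sum.inl u) (Sum.inr p) = RL u ↑p.1 := by
    intro u p
    obtain ⟨a, b, hadj, he⟩ := edge_cases p.1.2
    rw [rp_lr hconn hq hr' hKsymm hKr hKcol u a b hadj p he, he]
    simp only [hRLdef, Sym2.lift_mk]
  have hrr : ∀ p p' : G.edgeSet × Fin q,
      r' (Sum.inr p) (Sum.inr p') = RR ↑p.1 ↑p'.1 - (if p = p' then 1 else 0) := by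
    intro p p'
    obtain ⟨a, b, hab, he⟩ := edge_cases p.1.2
    obtain ⟨c, d, hcd, he'⟩ := edge_cases p'.1.2
    by_cases hpe : p = p'
    · subst hpe
      rw [if_pos rfl, hr'self (Sum.inr p), he]
      simp only [hRRdef, hCRdef, hrSdef, hREdef, Sym2.lift_mk]
      rw [hrself a, hrself b, hrsymm b a]
      ring
    · rw [if_neg hpe, sub_zero,
        rp_rr hconn hq hr' hKsymm hKr hKcol a b c d hab hcd p p' he he' hpe, he, he']
      simp only [hRRdef, hCRdef, hrSdef, hREdef, Sym2.lift_mk]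
      ring
  -- degrees
  have hdl : ∀ u, (((qSubdivision G q).degree (Sum.inl u) : ℕ) : ℝ)
      = (q:ℝ) * (G.degree u : ℝ) := by
    intro u
    rw [H_degree_inl]
    push_cast
    ring
  have hdr : ∀ p : G.edgeSet × Fin q, (((qSubdivision G q).degree (Sum.inr p) : ℕ) : ℝ) = 2 := by
    intro p
    rw [H_degree_inr]
    norm_num
  -- edge sums
  have hp1 : ∀ u, ∑ a, ∑ b, (if G.Adj a b then r u a else 0) = Su u := by
    intro u
    rw [adj_sum_left (fun a => r u a), hSudef]
    exact Finset.sum_congr rfl fun a _ => by ring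
  have hp2 : ∀ u, ∑ a, ∑ b, (if G.Adj a b then r u b else 0) = Su u := by
    intro u
    rw [adj_sum_right (fun b => r u b), hSudef]
    exact Finset.sum_congr rfl fun a _ => by ring
  have hp4 : ∑ a, ∑ b, (if G.Adj a b then (1:ℝ) else 0) = 2 * m := by
    rw [adj_sum_left (fun _ => (1:ℝ))]
    simp only [one_mul]
    exact hdeg2m
  have hEu : ∀ u, 2 * ∑ e ∈ G.edgeFinset, RL u e
      = (2/(q:ℝ)) * Su u - (n-1)/(q:ℝ) + m := by
    intro u
    rw [hRLdef]
    rw [two_mul_sum_edgeFinset _ _]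
    have hsp : ∀ a b : V,
        (if G.Adj a b then ((1/(q:ℝ)) * (r u a + r u b - r a b / 2) + 1/2) else 0)
        = (1/(q:ℝ)) * (if G.Adj a b then r u a else 0)
          + (1/(q:ℝ)) * (if G.Adj a b then r u b else 0)
          - (1/(2*(q:ℝ))) * (if G.Adj a b then r a b else 0)
          + (1/2) * (if G.Adj a b then (1:ℝ) else 0) := by
      intro a b
      split_ifs <;> field_simp <;> ring
    rw [Finset.sum_congr rfl fun a _ => Finset.sum_congr rfl fun b _ => hsp a b]
    rw [dsum4 (1/(q:ℝ)) (1/(q:ℝ)) (1/(2*(q:ℝ))) (1/2)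
      (fun a b => if G.Adj a b then r u a else 0)
      (fun a b => if G.Adj a b then r u b else 0)
      (fun a b => if G.Adj a b then r a b else 0)
      (fun a b => if G.Adj a b then (1:ℝ) else 0)]
    rw [hp1 u, hp2 u, hF, hp4]
    field_simp
    ring
  have hrSsum : ∀ x, ∑ f ∈ G.edgeFinset, rS x f = Su x := by
    intro x
    have h2 := two_mul_sum_edgeFinset (G := G)
      (fun c d => r x c + r x d) (by intro c d; ring)
    have hsp : ∀ c d : V, (if G.Adj c d then (r x c + r x d) else 0)
        = (1:ℝ) * (if G.Adj c d then r x c else 0) + (1:ℝ) * (if G.Adj c d then r x d else 0) := by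
      intro c d; split_ifs <;> ring
    rw [Finset.sum_congr rfl fun c _ => Finset.sum_congr rfl fun d _ => hsp c d,
      dsum_add 1 1 _ _, hp1 x, hp2 x] at h2
    rw [hrSdef]
    linarith
  have hREsum : ∑ e ∈ G.edgeFinset, RE e = n - 1 := by
    have h2 := two_mul_sum_edgeFinset (G := G) r hrsymm
    rw [hF] at h2
    rw [hREdef]
    linarith
  have hSSsum : ∑ e ∈ G.edgeFinset, SS e = SM := by
    have h2 := two_mul_sum_edgeFinset (G := G)
      (fun a b => Su a + Su b) (by intro a b; ring)
    have hsp : ∀ a b : V, (if G.Adj a b then (Su a + Su b) else 0)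
        = (1:ℝ) * (if G.Adj a b then Su a else 0) + (1:ℝ) * (if G.Adj a b then Su b else 0) := by
      intro a b; split_ifs <;> ring
    have hqa : ∑ a, ∑ b, (if G.Adj a b then Su a else 0) = SM := by
      rw [adj_sum_left Su, ← hSuD]
      exact Finset.sum_congr rfl fun a _ => by ring
    have hqb : ∑ a, ∑ b, (if G.Adj a b then Su b else 0) = SM := by
      rw [adj_sum_right Su, ← hSuD]
      exact Finset.sum_congr rfl fun a _ => by ring
    rw [Finset.sum_congr rfl fun a _ => Finset.sum_congr rfl fun b _ => hsp a b,
      dsum_add 1 1 _ _, hqa, hqb] at h2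
    rw [hSSdef]
    linarith
  have hmcard : ((Fintype.card G.edgeSet : ℕ) : ℝ) = m := by
    rw [hm]
    norm_cast
    exact (Set.toFinset_card _).symm
  have hpcard : ∑ _p : G.edgeSet × Fin q, (1:ℝ) = m * q := by
    rw [Finset.sum_const, card_univ, nsmul_eq_mul, mul_one, Fintype.card_prod, Fintype.card_fin]
    push_cast
    rw [hmcard]
  -- Block 1
  have hB1 : ∑ u, ∑ v, ((((qSubdivision G q).degree (Sum.inl u) : ℕ) : ℝ)
        + (((qSubdivision G q).degree (Sum.inl v) : ℕ) : ℝ)) * r' (Sum.inl u) (Sum.inl v)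
      = 4 * SA := by
    have hpt : ∀ u v, ((((qSubdivision G q).degree (Sum.inl u) : ℕ) : ℝ)
        + (((qSubdivision G q).degree (Sum.inl v) : ℕ) : ℝ)) * r' (Sum.inl u) (Sum.inl v)
        = 2 * ((G.degree u : ℝ) * r u v) + 2 * ((G.degree v : ℝ) * r u v) := by
      intro u v
      rw [hdl u, hdl v, hll u v]
      field_simp
    rw [Finset.sum_congr rfl fun u _ => Finset.sum_congr rfl fun v _ => hpt u v,
      dsum_add 2 2 _ _, hSb]
    rw [← hSA]
    ring
  -- Block 2
  have hB2 : ∑ u, ∑ p : G.edgeSet × Fin q, ((((qSubdivision G q).degree (Sum.inl u) : ℕ) : ℝ)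
        + (((qSubdivision G q).degree (Sum.inr p) : ℕ) : ℝ)) * r' (Sum.inl u) (Sum.inr p)
      = (q:ℝ) * SM + 2 * SA + (m*q)^2 + m*n*q - (m*q + n)*(n - 1) := by
    have hstep : ∀ u, ∑ p : G.edgeSet × Fin q,
        ((((qSubdivision G q).degree (Sum.inl u) : ℕ) : ℝ)
          + (((qSubdivision G q).degree (Sum.inr p) : ℕ) : ℝ)) * r' (Sum.inl u) (Sum.inr p)
        = ((q:ℝ) * (G.degree u : ℝ) + 2) * ((q:ℝ) * ∑ e ∈ G.edgeFinset, RL u e) := by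
      intro u
      have hpt : ∀ p : G.edgeSet × Fin q,
          ((((qSubdivision G q).degree (Sum.inl u) : ℕ) : ℝ)
            + (((qSubdivision G q).degree (Sum.inr p) : ℕ) : ℝ)) * r' (Sum.inl u) (Sum.inr p)
          = ((q:ℝ) * (G.degree u : ℝ) + 2) * RL u ↑p.1 := by
        intro p
        rw [hdl u, hdr p, hlr u p]
      rw [Finset.sum_congr rfl fun p _ => hpt p, ← Finset.mul_sum,
        sum_prodE (G := G) (RL u) q]
    rw [Finset.sum_congr rfl fun u _ => hstep u]
    have h1 : ∀ u, ((q:ℝ) * (G.degree u : ℝ) + 2) * ((q:ℝ) * ∑ e ∈ G.edgeFinset, RL u e)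
        = ((q:ℝ)/2) * (((q:ℝ) * (G.degree u : ℝ) + 2) * (2 * ∑ e ∈ G.edgeFinset, RL u e)) := by
      intro u; ring
    rw [Finset.sum_congr rfl fun u _ => h1 u]
    have h2 : ∀ u, ((q:ℝ)/2) * (((q:ℝ) * (G.degree u : ℝ) + 2)
          * (2 * ∑ e ∈ G.edgeFinset, RL u e))
        = ((q:ℝ)/2) * (((q:ℝ) * (G.degree u : ℝ) + 2)
          * ((2/(q:ℝ)) * Su u - (n-1)/(q:ℝ) + m)) := by
      intro u
      rw [hEu u]
    rw [Finset.sum_congr rfl fun u _ => h2 u]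
    have h3 : ∀ u, ((q:ℝ)/2) * (((q:ℝ) * (G.degree u : ℝ) + 2)
          * ((2/(q:ℝ)) * Su u - (n-1)/(q:ℝ) + m))
        = (q:ℝ) * ((G.degree u : ℝ) * Su u) + 2 * Su u
          + ((q:ℝ)*(m*q - (n-1))/2) * (G.degree u : ℝ) + ((q:ℝ)*m - (n-1)) := by
      intro u
      field_simp
      ring
    rw [Finset.sum_congr rfl fun u _ => h3 u]
    rw [Finset.sum_add_distrib, Finset.sum_add_distrib, Finset.sum_add_distrib,
      ← Finset.mul_sum, ← Finset.mul_sum, ← Finset.mul_sum, hSuD, hSusum, hdeg2m,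
      Finset.sum_const, card_univ, nsmul_eq_mul, ← hn]
    ring
  -- Block 3 equals Block 2
  have hB3 : ∑ p : G.edgeSet × Fin q, ∑ u, ((((qSubdivision G q).degree (Sum.inr p) : ℕ) : ℝ)
        + (((qSubdivision G q).degree (Sum.inl u) : ℕ) : ℝ)) * r' (Sum.inr p) (Sum.inl u)
      = ∑ u, ∑ p : G.edgeSet × Fin q, ((((qSubdivision G q).degree (Sum.inl u) : ℕ) : ℝ)
        + (((qSubdivision G q).degree (Sum.inr p) : ℕ) : ℝ)) * r' (Sum.inl u) (Sum.inr p) := by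
    rw [Finset.sum_comm]
    refine Finset.sum_congr rfl fun u _ => Finset.sum_congr rfl fun p _ => ?_
    rw [hr'symm (Sum.inr p) (Sum.inl u)]
    ring
  -- Block 4
  have hdiag : ∑ p : G.edgeSet × Fin q, ∑ p' : G.edgeSet × Fin q,
      (if p = p' then (1:ℝ) else 0) = m * q := by
    have h1 : ∀ p : G.edgeSet × Fin q, ∑ p' : G.edgeSet × Fin q,
        (if p = p' then (1:ℝ) else 0) = 1 := by
      intro p
      rw [Finset.sum_ite_eq univ p (fun _ => (1:ℝ))]
      simp
    rw [Finset.sum_congr rfl fun p _ => h1 p, hpcard]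
  have hCRf : ∀ e : Sym2 V, ∑ f ∈ G.edgeFinset, CR e f = SS e := by
    intro e
    induction e with
    | _ a b =>
      simp only [hCRdef, hSSdef, Sym2.lift_mk]
      rw [Finset.sum_add_distrib, hrSsum a, hrSsum b]
  have hRRin : ∀ p : G.edgeSet × Fin q, ∑ p' : G.edgeSet × Fin q, RR ↑p.1 ↑p'.1
      = m*q + (1/(2*(q:ℝ))) * ((q:ℝ) * SS ↑p.1 - (m*q) * RE ↑p.1 - (q:ℝ)*(n-1)) := by
    intro p
    have hpt : ∀ p' : G.edgeSet × Fin q, RR ↑p.1 ↑p'.1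
        = 1 + (1/(2*(q:ℝ))) * CR ↑p.1 ↑p'.1 - (1/(2*(q:ℝ))) * RE ↑p.1
          - (1/(2*(q:ℝ))) * RE ↑p'.1 := by
      intro p'
      rw [hRRdef]
      ring
    rw [Finset.sum_congr rfl fun p' _ => hpt p']
    rw [Finset.sum_sub_distrib, Finset.sum_sub_distrib, Finset.sum_add_distrib,
      ← Finset.mul_sum, ← Finset.mul_sum, ← Finset.mul_sum, hpcard]
    have hc : ∑ p' : G.edgeSet × Fin q, CR ↑p.1 ↑p'.1 = (q:ℝ) * SS ↑p.1 := by
      rw [sum_prodE (G := G) (CR ↑p.1) q, hCRf]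
    have hre : ∑ p' : G.edgeSet × Fin q, RE ↑p'.1 = (q:ℝ) * (n - 1) := by
      rw [sum_prodE (G := G) RE q, hREsum]
    rw [hc, hre, Finset.sum_const, card_univ, nsmul_eq_mul, Fintype.card_prod,
      Fintype.card_fin]
    push_cast
    rw [hmcard]
    ring
  have hB4 : ∑ p : G.edgeSet × Fin q, ∑ p' : G.edgeSet × Fin q,
      ((((qSubdivision G q).degree (Sum.inr p) : ℕ) : ℝ)
        + (((qSubdivision G q).degree (Sum.inr p') : ℕ) : ℝ)) * r' (Sum.inr p) (Sum.inr p')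
      = 4*((m*q)^2 - m*q) + 2*(q:ℝ)*SM - 4*m*q*(n-1) := by
    have hpt : ∀ p p' : G.edgeSet × Fin q,
        ((((qSubdivision G q).degree (Sum.inr p) : ℕ) : ℝ)
          + (((qSubdivision G q).degree (Sum.inr p') : ℕ) : ℝ)) * r' (Sum.inr p) (Sum.inr p')
        = 4 * RR ↑p.1 ↑p'.1 - 4 * (if p = p' then (1:ℝ) else 0) := by
      intro p p'
      rw [hdr p, hdr p', hrr p p']
      ring
    have hZ : ∑ p : G.edgeSet × Fin q, ∑ p' : G.edgeSet × Fin q, RR ↑p.1 ↑p'.1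
        = (m*q)*(m*q) + ((q:ℝ)/(2*(q:ℝ))) * ((q:ℝ) * SM)
          - ((m*q)/(2*(q:ℝ))) * ((q:ℝ) * (n-1))
          - (m*q) * ((1/(2*(q:ℝ))) * ((q:ℝ)*(n-1))) := by
      rw [Finset.sum_congr rfl fun p _ => hRRin p]
      have hpt2 : ∀ p : G.edgeSet × Fin q,
          (m*q + (1/(2*(q:ℝ))) * ((q:ℝ) * SS ↑p.1 - (m*q) * RE ↑p.1 - (q:ℝ)*(n-1)))
          = (m*q - (1/(2*(q:ℝ))) * ((q:ℝ)*(n-1)))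
            + ((q:ℝ)/(2*(q:ℝ))) * SS ↑p.1 - ((m*q)/(2*(q:ℝ))) * RE ↑p.1 := by
        intro p; ring
      rw [Finset.sum_congr rfl fun p _ => hpt2 p, Finset.sum_sub_distrib,
        Finset.sum_add_distrib, ← Finset.mul_sum, ← Finset.mul_sum,
        sum_prodE (G := G) SS q, sum_prodE (G := G) RE q, hSSsum, hREsum,
        Finset.sum_const, card_univ, nsmul_eq_mul, Fintype.card_prod, Fintype.card_fin]
      push_cast
      rw [hmcard]
      ring
    rw [Finset.sum_congr rfl fun p _ => Finset.sum_congr rfl fun p' _ => hpt p p',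
      dsum_sub 4 4 _ _, hdiag, hZ]
    field_simp
    ring
  -- assemble
  have hADD : addKirchhoff G r = SA := by
    unfold addKirchhoff
    have hpt : ∀ u v, ((G.degree u : ℝ) + (G.degree v : ℝ)) * r u v
        = 1 * ((G.degree u : ℝ) * r u v) + 1 * ((G.degree v : ℝ) * r u v) := by
      intro u v; ring
    rw [Finset.sum_congr rfl fun u _ => Finset.sum_congr rfl fun v _ => hpt u v,
      dsum_add 1 1 _ _, hSb, ← hSA]
    ring
  have hMUL : mulKirchhoff G r = SM / 2 := by
    unfold mulKirchhoff
    rw [← hSM]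
  have hLHS : addKirchhoff (qSubdivision G q) r'
      = ((∑ u, ∑ v, ((((qSubdivision G q).degree (Sum.inl u) : ℕ) : ℝ)
            + (((qSubdivision G q).degree (Sum.inl v) : ℕ) : ℝ)) * r' (Sum.inl u) (Sum.inl v))
        + (∑ u, ∑ p : G.edgeSet × Fin q, ((((qSubdivision G q).degree (Sum.inl u) : ℕ) : ℝ)
            + (((qSubdivision G q).degree (Sum.inr p) : ℕ) : ℝ)) * r' (Sum.inl u) (Sum.inr p))
        + ((∑ p : G.edgeSet × Fin q, ∑ u, ((((qSubdivision G q).degree (Sum.inr p) : ℕ) : ℝ)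
            + (((qSubdivision G q).degree (Sum.inl u) : ℕ) : ℝ)) * r' (Sum.inr p) (Sum.inl u))
        + (∑ p : G.edgeSet × Fin q, ∑ p' : G.edgeSet × Fin q,
            ((((qSubdivision G q).degree (Sum.inr p) : ℕ) : ℝ)
            + (((qSubdivision G q).degree (Sum.inr p') : ℕ) : ℝ)) * r' (Sum.inr p) (Sum.inr p')))) / 2 := by
    unfold addKirchhoff
    rw [sum_sum_sum_type (fun x y => (((qSubdivision G q).degree x : ℝ)
      + ((qSubdivision G q).degree y : ℝ)) * r' x y)]
  rw [hLHS, hB1, hB2, hB3, hB2, hB4, hADD, hMUL]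
  ring
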